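/- Row-sum formula for the expected interaction (Equation (4) of the paper): let Ω be a finite set with |Ω| = n ≥ 2 and v a value function on subsets of Ω. Then for every i ∈ Ω, ∑_{j ∈ Ω\{i}} I_{ij}(v) = v(Ω) − v(Ω\{i}) − v({i}) + v(∅). Consequently the average interaction over all ordered pairs of distinct players equals (1/(n−1)) times the average over i of v(Ω) − v(Ω\{i}) − v({i}) + v(∅). -/

import Mathlib

open Finset

/-- The Shapley interaction between distinct players `i, j ∈ Ω` (`|Ω| = n ≥ 2`):
`I_{ij}(v) = ∑_{S ⊆ Ω\{i,j}} [|S|!·(n−|S|−2)!/(n−1)!]·(v(S∪{i,j}) − v(S∪{i}) − v(S∪{j}) + v(S))`. -/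
noncomputable def shapleyInteraction {α : Type*} [DecidableEq α] (Ω : Finset α)
    (v : Finset α → ℝ) (i j : α) : ℝ :=
  ∑ S ∈ ((Ω.erase i).erase j).powerset,
    ((Nat.factorial S.card * Nat.factorial (Ω.card - S.card - 2) : ℕ) : ℝ) /
        (Nat.factorial (Ω.card - 1) : ℝ) *
      (v (insert i (insert j S)) - v (insert i S) - v (insert j S) + v S)

/-- Row-sum formula for the expected interaction (Equation (4) of the paper): for every
`i ∈ Ω`, `∑_{j ∈ Ω\{i}} I_{ij}(v) = v(Ω) − v(Ω\{i}) − v({i}) + v(∅)`. Consequently the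
average interaction over all ordered pairs of distinct players equals `1/(n−1)` times the
average over `i` of `v(Ω) − v(Ω\{i}) − v({i}) + v(∅)`. -/
private lemma shapley_aux1 (n : ℕ) (h : 2 ≤ n) :
    (n - 1) * (Nat.factorial 0 * Nat.factorial (n - 0 - 2)) = Nat.factorial (n - 1) := by
  obtain ⟨m, rfl⟩ : ∃ m, n = m + 2 := ⟨n - 2, by omega⟩
  show (m + 1) * (Nat.factorial 0 * Nat.factorial m) = Nat.factorial (m + 1)
  simp [Nat.factorial_succ]

private lemma shapley_aux2 (n : ℕ) (h : 2 ≤ n) :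
    (n - 1) * (Nat.factorial (n - 1 - 1) * Nat.factorial (n - (n - 1 - 1) - 2))
      = Nat.factorial (n - 1) := by
  obtain ⟨m, rfl⟩ : ∃ m, n = m + 2 := ⟨n - 2, by omega⟩
  have e2 : m + 2 - 1 - 1 = m := by omega
  have e3 : m + 2 - m - 2 = 0 := by omega
  have e1 : m + 2 - 1 = m + 1 := by omega
  rw [e2, e3, e1]
  simp [Nat.factorial_succ]

private lemma shapley_aux3 (n t : ℕ) (h1 : 1 ≤ t) (h2 : t ≤ n - 2) (h3 : 2 ≤ n) :
    t * (Nat.factorial (t - 1) * Nat.factorial (n - (t - 1) - 2))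
      = (n - 1 - t) * (Nat.factorial t * Nat.factorial (n - t - 2)) := by
  obtain ⟨s, rfl⟩ : ∃ s, t = s + 1 := ⟨t - 1, by omega⟩
  obtain ⟨k, rfl⟩ : ∃ k, n = s + k + 3 := ⟨n - s - 3, by omega⟩
  have e1 : s + 1 - 1 = s := by omega
  have e2 : s + k + 3 - s - 2 = k + 1 := by omega
  have e3 : s + k + 3 - 1 - (s + 1) = k + 1 := by omega
  have e4 : s + k + 3 - (s + 1) - 2 = k := by omega
  rw [e1, e2, e3, e4, Nat.factorial_succ k, Nat.factorial_succ s]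
  ring

private theorem shapley_row_sum_aux {α : Type*} [DecidableEq α] (Ω : Finset α)
    (hn : 2 ≤ Ω.card) (v : Finset α → ℝ) :
    ∀ i ∈ Ω, ∑ j ∈ Ω.erase i, shapleyInteraction Ω v i j
        = v Ω - v (Ω.erase i) - v {i} + v ∅ := by
  intro i hi
  set n := Ω.card with hndef
  set A := Ω.erase i with hAdef
  have hA : A.card = n - 1 := card_erase_of_mem hi
  set w : ℕ → ℝ := fun s => ((Nat.factorial s * Nat.factorial (n - s - 2) : ℕ) : ℝ) /
      ((Nat.factorial (n - 1) : ℕ) : ℝ) with hw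
  have hD : ((Nat.factorial (n - 1) : ℕ) : ℝ) ≠ 0 := by
    exact_mod_cast (Nat.factorial_pos (n - 1)).ne'
  have hAne : A ≠ ∅ := by
    intro h
    rw [h, card_empty] at hA
    omega
  -- reindexing lemma for the "j inside" part
  have hP : ∀ j ∈ A,
      (∑ S ∈ (A.erase j).powerset, w S.card * (v (insert i (insert j S)) - v (insert j S)))
      = ∑ T ∈ A.powerset.filter (fun T => j ∈ T), w (T.card - 1) * (v (insert i T) - v T) := by
    intro j hj
    refine Finset.sum_nbij' (fun S => insert j S) (fun T => T.erase j) ?_ ?_ ?_ ?_ ?_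
    · intro S hS
      rw [mem_powerset, subset_erase] at hS
      simp [mem_filter, mem_powerset, insert_subset_iff, hj, hS.1]
    · intro T hT
      rw [mem_filter, mem_powerset] at hT
      simp only [mem_powerset, subset_erase]
      exact ⟨subset_trans (erase_subset _ _) hT.1, notMem_erase j T⟩
    · intro S hS
      rw [mem_powerset, subset_erase] at hS
      exact erase_insert hS.2
    · intro T hT
      rw [mem_filter] at hT
      exact insert_erase hT.2
    · intro S hS
      rw [mem_powerset, subset_erase] at hS
      rw [card_insert_of_notMem hS.2]
      simp
  have hQdom : ∀ j : α, (A.erase j).powerset = A.powerset.filter (fun S => j ∉ S) := by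
    intro j
    ext S
    simp [mem_powerset, subset_erase, mem_filter, and_comm]
  -- split each shapleyInteraction
  have esplit : ∀ j ∈ A, shapleyInteraction Ω v i j
      = (∑ T ∈ A.powerset.filter (fun T => j ∈ T), w (T.card - 1) * (v (insert i T) - v T))
      + (∑ S ∈ A.powerset.filter (fun S => j ∉ S), w S.card * (v S - v (insert i S))) := by
    intro j hj
    rw [← hP j hj, ← hQdom j]
    unfold shapleyInteraction
    rw [← sum_add_distrib]
    exact sum_congr rfl fun S hS => by rw [hw]; ring
  clear_value n
  rw [sum_congr rfl esplit, sum_add_distrib]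
  -- swap sums
  have swap1 : (∑ j ∈ A, ∑ T ∈ A.powerset.filter (fun T => j ∈ T),
        w (T.card - 1) * (v (insert i T) - v T))
      = ∑ T ∈ A.powerset, (T.card : ℝ) * (w (T.card - 1) * (v (insert i T) - v T)) := by
    simp_rw [sum_filter]
    rw [sum_comm]
    refine sum_congr rfl fun T hT => ?_
    rw [← sum_filter, filter_mem_eq_inter, inter_eq_right.mpr (mem_powerset.mp hT),
      sum_const, nsmul_eq_mul]
  have swap2 : (∑ j ∈ A, ∑ S ∈ A.powerset.filter (fun S => j ∉ S),
        w S.card * (v S - v (insert i S)))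
      = ∑ T ∈ A.powerset, ((A.card - T.card : ℕ) : ℝ) * (w T.card * (v T - v (insert i T))) := by
    simp_rw [sum_filter]
    rw [sum_comm]
    refine sum_congr rfl fun T hT => ?_
    rw [← sum_filter, ← sdiff_eq_filter, sum_const, nsmul_eq_mul,
      card_sdiff_of_subset (mem_powerset.mp hT)]
  rw [swap1, swap2, ← sum_add_distrib]
  -- pointwise evaluation
  have hone1 : ((n - 1 : ℕ) : ℝ) * w 0 = 1 := by
    rw [hw]
    simp only
    rw [mul_div_assoc']
    rw [show ((n - 1 : ℕ) : ℝ) * ((Nat.factorial 0 * Nat.factorial (n - 0 - 2) : ℕ) : ℝ)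
        = ((Nat.factorial (n - 1) : ℕ) : ℝ) by exact_mod_cast congrArg (Nat.cast : ℕ → ℝ) (shapley_aux1 n hn)]
    exact div_self hD
  have hone2 : ((n - 1 : ℕ) : ℝ) * w (n - 1 - 1) = 1 := by
    rw [hw]
    simp only
    rw [mul_div_assoc']
    rw [show ((n - 1 : ℕ) : ℝ) * ((Nat.factorial (n - 1 - 1) * Nat.factorial (n - (n - 1 - 1) - 2) : ℕ) : ℝ)
        = ((Nat.factorial (n - 1) : ℕ) : ℝ) by exact_mod_cast congrArg (Nat.cast : ℕ → ℝ) (shapley_aux2 n hn)]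
    exact div_self hD
  have pointwise : ∀ T ∈ A.powerset,
      ((T.card : ℝ) * (w (T.card - 1) * (v (insert i T) - v T))
        + ((A.card - T.card : ℕ) : ℝ) * (w T.card * (v T - v (insert i T))))
      = (if T = A then v (insert i T) - v T else 0)
        + (if T = ∅ then v T - v (insert i T) else 0) := by
    intro T hT
    have hTA : T ⊆ A := mem_powerset.mp hT
    have htle : T.card ≤ n - 1 := hA ▸ card_le_card hTA
    by_cases h0 : T = ∅
    · subst h0
      rw [if_neg (Ne.symm hAne), if_pos rfl]
      simp only [card_empty, Nat.cast_zero, zero_mul, zero_add, Nat.sub_zero, hA]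
      rw [← mul_assoc, hone1, one_mul]
    by_cases hAeq : T = A
    · subst hAeq
      rw [if_pos rfl, if_neg h0, Nat.sub_self, Nat.cast_zero, zero_mul, add_zero, hA]
      rw [← mul_assoc, hone2, one_mul, add_zero]
    · -- middle case: coefficients cancel
      have ht1 : 1 ≤ T.card := by
        have := Finset.card_pos.mpr (nonempty_iff_ne_empty.mpr h0)
        omega
      have ht2 : T.card ≤ n - 2 := by
        have : T.card < A.card := card_lt_card (ssubset_of_subset_of_ne hTA hAeq)
        omega
      have hcast : (T.card : ℝ) * ((Nat.factorial (T.card - 1) * Nat.factorial (n - (T.card - 1) - 2) : ℕ) : ℝ)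
          = ((A.card - T.card : ℕ) : ℝ) * ((Nat.factorial T.card * Nat.factorial (n - T.card - 2) : ℕ) : ℝ) := by
        rw [hA]
        exact_mod_cast congrArg (Nat.cast : ℕ → ℝ) (shapley_aux3 n T.card ht1 ht2 hn)
      rw [if_neg hAeq, if_neg h0, hw]
      simp only
      linear_combination ((v (insert i T) - v T) / ((Nat.factorial (n - 1) : ℕ) : ℝ)) * hcast
  rw [sum_congr rfl pointwise, sum_add_distrib, sum_ite_eq' A.powerset A, sum_ite_eq' A.powerset ∅,
    if_pos (mem_powerset_self A), if_pos (empty_mem_powerset A), hAdef, insert_erase hi]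
  simp only [insert_empty_eq]
  ring

theorem shapley_interaction_row_sum {α : Type*} [DecidableEq α] (Ω : Finset α)
    (hn : 2 ≤ Ω.card) (v : Finset α → ℝ) :
    (∀ i ∈ Ω, ∑ j ∈ Ω.erase i, shapleyInteraction Ω v i j
        = v Ω - v (Ω.erase i) - v {i} + v ∅) ∧
    (1 / ((Ω.card : ℝ) * ((Ω.card : ℝ) - 1))) *
        ∑ i ∈ Ω, ∑ j ∈ Ω.erase i, shapleyInteraction Ω v i j =
      (1 / ((Ω.card : ℝ) - 1)) *
        ((1 / (Ω.card : ℝ)) * ∑ i ∈ Ω, (v Ω - v (Ω.erase i) - v {i} + v ∅)) := by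
  have key := shapley_row_sum_aux Ω hn v
  refine ⟨key, ?_⟩
  rw [sum_congr rfl key]
  rw [one_div, mul_inv, one_div, one_div]
  ring
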